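/- Let G be a stable weighted multigraph of genus g and let d be a multidegree of total degree g − 2 on G. Then d is semistable if and only if for every vertex v ∈ V there exists an orientation O of G such that d = d_O − v and there is no nonempty proper subset S ⊊ V with v ∈ S whose cut is directed away from S. -/

import Mathlib

open Finset

/-- A multigraph on vertex type `V` with edge type `E`: each edge `e` joins the
(possibly equal) vertices `fst e` and `snd e` (loops and multiple edges allowed). -/
structure Multigraph (V E : Type) where
  fst : E → V
  snd : E → V

/-- An orientation of a multigraph: each edge gets a tail and a head, which are its
two endpoints (in one of the two possible orders). -/
structure GraphOrientation {V E : Type} (G : Multigraph V E) where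
  tail : E → V
  head : E → V
  compat : ∀ e, (tail e = G.fst e ∧ head e = G.snd e) ∨ (tail e = G.snd e ∧ head e = G.fst e)

variable {V E : Type} [Fintype V] [Fintype E] [DecidableEq V] [DecidableEq E]

namespace Multigraph

/-- `E(S)`: the set of edges with both endpoints in `S`. -/
def edgesIn (G : Multigraph V E) (S : Finset V) : Finset E :=
  univ.filter fun e => G.fst e ∈ S ∧ G.snd e ∈ S

/-- Membership in the cut of `S`: exactly one endpoint of `e` lies in `S`. -/
def InCut (G : Multigraph V E) (S : Finset V) (e : E) : Prop :=
  (G.fst e ∈ S ∧ G.snd e ∉ S) ∨ (G.fst e ∉ S ∧ G.snd e ∈ S)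

instance (G : Multigraph V E) (S : Finset V) : DecidablePred (G.InCut S) := fun e =>
  decidable_of_iff ((G.fst e ∈ S ∧ G.snd e ∉ S) ∨ (G.fst e ∉ S ∧ G.snd e ∈ S)) Iff.rfl

/-- `ε(S)`: the number of edges with exactly one endpoint in `S`. -/
def cutCard (G : Multigraph V E) (S : Finset V) : ℕ :=
  (univ.filter fun e => G.InCut S e).card

/-- The genus `g(S) = |E(S)| - |S| + 1 + Σ_{v ∈ S} g_v` of a subset of vertices,
for the vertex weight function `w`. -/
def genusOf (G : Multigraph V E) (w : V → ℕ) (S : Finset V) : ℤ :=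
  ((G.edgesIn S).card : ℤ) - S.card + 1 + ∑ v ∈ S, (w v : ℤ)

/-- The genus of the weighted multigraph. -/
def genus (G : Multigraph V E) (w : V → ℕ) : ℤ := G.genusOf w univ

/-- The valence of a vertex: the number of edge-ends at it (a loop counts twice). -/
def valence (G : Multigraph V E) (v : V) : ℕ :=
  (univ.filter fun e => G.fst e = v).card + (univ.filter fun e => G.snd e = v).card

/-- Adjacency via some edge. -/
def Adj (G : Multigraph V E) (a b : V) : Prop :=
  ∃ e, (G.fst e = a ∧ G.snd e = b) ∨ (G.fst e = b ∧ G.snd e = a)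

/-- The multigraph is connected: nonempty, and any two vertices are joined by a path. -/
def Connected (G : Multigraph V E) : Prop :=
  Nonempty V ∧ ∀ a b : V, Relation.ReflTransGen G.Adj a b

/-- Adjacency inside the induced subgraph on `S` (via an edge of `E(S)`). -/
def AdjOn (G : Multigraph V E) (S : Finset V) (a b : V) : Prop :=
  ∃ e, ((G.fst e = a ∧ G.snd e = b) ∨ (G.fst e = b ∧ G.snd e = a)) ∧
    G.fst e ∈ S ∧ G.snd e ∈ S

/-- The induced subgraph on `S` is connected. -/
def ConnectedOn (G : Multigraph V E) (S : Finset V) : Prop :=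
  ∀ a ∈ S, ∀ b ∈ S, Relation.ReflTransGen (G.AdjOn S) a b

/-- The weighted multigraph is stable: connected, of genus at least 2, and every
vertex of weight 0 has valence at least 3. -/
def IsStable (G : Multigraph V E) (w : V → ℕ) : Prop :=
  G.Connected ∧ 2 ≤ G.genus w ∧ ∀ v, w v = 0 → 3 ≤ G.valence v

/-- A multidegree `d : V → ℤ` of total degree `δ = ∑ v, d v` is semistable if for every
nonempty `S ⊆ V`:
`(2g-2)(g(S)-1) + (δ-g+1)(2g(S)-2+ε(S)) ≤ (2g-2) Σ_{v ∈ S} d v`. -/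
def Semistable (G : Multigraph V E) (w : V → ℕ) (d : V → ℤ) : Prop :=
  ∀ S : Finset V, S.Nonempty →
    (2 * G.genus w - 2) * (G.genusOf w S - 1) +
      ((∑ v, d v) - G.genus w + 1) * (2 * G.genusOf w S - 2 + (G.cutCard S : ℤ)) ≤
    (2 * G.genus w - 2) * ∑ v ∈ S, d v

/-- A multidegree is stable if it is semistable and the semistability inequality is
strict for every nonempty proper subset of vertices. -/
def StableDeg (G : Multigraph V E) (w : V → ℕ) (d : V → ℤ) : Prop :=
  G.Semistable w d ∧ ∀ S : Finset V, S.Nonempty → S ≠ univ →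
    (2 * G.genus w - 2) * (G.genusOf w S - 1) +
      ((∑ v, d v) - G.genus w + 1) * (2 * G.genusOf w S - 2 + (G.cutCard S : ℤ)) <
    (2 * G.genus w - 2) * ∑ v ∈ S, d v

/-- A multidegree is effective if it is nonnegative at every vertex. -/
def Effective (d : V → ℤ) : Prop := ∀ v, 0 ≤ d v

end Multigraph

namespace GraphOrientation

variable {G : Multigraph V E}

/-- The indegree of a vertex: the number of edges with head `v`. -/
def indeg (O : GraphOrientation G) (v : V) : ℕ :=
  (univ.filter fun e => O.head e = v).card

/-- The multidegree `d_O` associated to an orientation: `d_O(v) = g_v - 1 + indeg_O(v)`. -/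
def multidegree (O : GraphOrientation G) (w : V → ℕ) : V → ℤ :=
  fun v => (w v : ℤ) - 1 + (O.indeg v : ℤ)

/-- The edge `e₀` lies on a directed cycle of `O`: there are `k ≥ 1` distinct vertices
`vs` and distinct edges `es`, with `es i` directed from `vs i` to `vs (i+1)`,
one of the edges being `e₀`. -/
def EdgeInCycle (O : GraphOrientation G) (e₀ : E) : Prop :=
  ∃ (k : ℕ) (vs : Fin (k + 1) → V) (es : Fin (k + 1) → E),
    Function.Injective vs ∧ Function.Injective es ∧ (∃ i, es i = e₀) ∧
    ∀ i, O.tail (es i) = vs i ∧ O.head (es i) = vs (i + 1)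

/-- The orientation contains a directed cycle. -/
def HasDirectedCycle (O : GraphOrientation G) : Prop :=
  ∃ (k : ℕ) (vs : Fin (k + 1) → V) (es : Fin (k + 1) → E),
    Function.Injective vs ∧ Function.Injective es ∧
    ∀ i, O.tail (es i) = vs i ∧ O.head (es i) = vs (i + 1)

/-- The orientation is acyclic: it contains no directed cycle. -/
def Acyclic (O : GraphOrientation G) : Prop := ¬ O.HasDirectedCycle

/-- The orientation is totally cyclic: every edge lies on a directed cycle. -/
def TotallyCyclic (O : GraphOrientation G) : Prop := ∀ e, O.EdgeInCycle e

/-- The cut of `S` is directed towards `S`: every edge of the cut has its head in `S`. -/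
def CutTowards (O : GraphOrientation G) (S : Finset V) : Prop :=
  ∀ e, G.InCut S e → O.head e ∈ S

/-- The cut of `S` is directed away from `S`: every edge of the cut has its tail in `S`. -/
def CutAway (O : GraphOrientation G) (S : Finset V) : Prop :=
  ∀ e, G.InCut S e → O.tail e ∈ S

end GraphOrientation

section Aux

variable {V E : Type} [Fintype V] [Fintype E] [DecidableEq V] [DecidableEq E]
variable {G : Multigraph V E}

lemma card_filter_head (O : GraphOrientation G) (S : Finset V) :
    ∑ u ∈ S, O.indeg u = (univ.filter fun e => O.head e ∈ S).card := by
  calc ∑ u ∈ S, O.indeg u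
      = ∑ u ∈ S, ∑ e : E, if O.head e = u then 1 else 0 := by
        refine Finset.sum_congr rfl fun u _ => ?_
        rw [GraphOrientation.indeg, Finset.card_filter]
    _ = ∑ e : E, ∑ u ∈ S, if O.head e = u then 1 else 0 := Finset.sum_comm
    _ = ∑ e : E, if O.head e ∈ S then 1 else 0 := by
        refine Finset.sum_congr rfl fun e _ => ?_
        exact Finset.sum_ite_eq S (O.head e) (fun _ => 1)
    _ = (univ.filter fun e => O.head e ∈ S).card := by
        rw [Finset.card_filter]

lemma head_mem_iff (O : GraphOrientation G) (S : Finset V) (e : E) :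
    O.head e ∈ S ↔ (e ∈ G.edgesIn S ∨ (G.InCut S e ∧ O.head e ∈ S)) := by
  rcases O.compat e with ⟨ht, hh⟩ | ⟨ht, hh⟩ <;>
    simp only [Multigraph.edgesIn, Multigraph.InCut, Finset.mem_filter, Finset.mem_univ,
      true_and, hh] <;>
    by_cases h1 : G.fst e ∈ S <;> by_cases h2 : G.snd e ∈ S <;> simp [h1, h2]

lemma sum_indeg (O : GraphOrientation G) (S : Finset V) :
    ∑ u ∈ S, O.indeg u =
      (G.edgesIn S).card + (univ.filter fun e => G.InCut S e ∧ O.head e ∈ S).card := by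
  rw [card_filter_head]
  rw [← Finset.card_union_of_disjoint]
  · congr 1
    ext e
    simp only [Finset.mem_filter, Finset.mem_univ, true_and, Finset.mem_union]
    exact head_mem_iff O S e
  · rw [Finset.disjoint_left]
    intro e he he'
    simp only [Multigraph.edgesIn, Finset.mem_filter, Finset.mem_univ, true_and] at he he'
    rcases he'.1 with ⟨_, h⟩ | ⟨h, _⟩ <;> exact h (by tauto)

lemma sum_valence (G : Multigraph V E) (S : Finset V) :
    ∑ u ∈ S, G.valence u = 2 * (G.edgesIn S).card + G.cutCard S := by
  calc ∑ u ∈ S, G.valence u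
      = ∑ u ∈ S, ((∑ e : E, if G.fst e = u then 1 else 0) +
          (∑ e : E, if G.snd e = u then 1 else 0)) := by
        refine Finset.sum_congr rfl fun u _ => ?_
        rw [Multigraph.valence, Finset.card_filter, Finset.card_filter]
    _ = ∑ e : E, ∑ u ∈ S, ((if G.fst e = u then 1 else 0) + (if G.snd e = u then 1 else 0)) := by
        rw [← Finset.sum_comm]
        simp [Finset.sum_add_distrib]
    _ = ∑ e : E, ((if G.fst e ∈ S then 1 else 0) + (if G.snd e ∈ S then 1 else 0)) := by
        refine Finset.sum_congr rfl fun e _ => ?_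
        rw [Finset.sum_add_distrib, Finset.sum_ite_eq S (G.fst e) (fun _ => 1),
          Finset.sum_ite_eq S (G.snd e) (fun _ => 1)]
    _ = ∑ e : E, (2 * (if G.fst e ∈ S ∧ G.snd e ∈ S then 1 else 0) +
          (if G.InCut S e then 1 else 0)) := by
        refine Finset.sum_congr rfl fun e _ => ?_
        by_cases h1 : G.fst e ∈ S <;> by_cases h2 : G.snd e ∈ S <;>
          simp [Multigraph.InCut, h1, h2]
    _ = 2 * (G.edgesIn S).card + G.cutCard S := by
        rw [Finset.sum_add_distrib, ← Finset.mul_sum, Multigraph.edgesIn, Multigraph.cutCard,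
          Finset.card_filter, Finset.card_filter]

lemma edges_partition (G : Multigraph V E) (S : Finset V) :
    Fintype.card E = (G.edgesIn S).card + (G.edgesIn Sᶜ).card + G.cutCard S := by
  rw [Multigraph.edgesIn, Multigraph.edgesIn, Multigraph.cutCard, Finset.card_filter,
    Finset.card_filter, Finset.card_filter, ← Finset.sum_add_distrib, ← Finset.sum_add_distrib]
  rw [← Finset.card_univ, Finset.card_eq_sum_ones]
  refine Finset.sum_congr rfl fun e _ => ?_
  by_cases h1 : G.fst e ∈ S <;> by_cases h2 : G.snd e ∈ S <;>
    simp [Multigraph.InCut, h1, h2]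

lemma genus_compl (G : Multigraph V E) (w : V → ℕ) (S : Finset V) :
    G.genusOf w S + G.genusOf w Sᶜ = G.genus w + 1 - G.cutCard S := by
  have hE := edges_partition G S
  have hV : S.card + Sᶜ.card = Fintype.card V := Finset.card_add_card_compl S
  have hw : ∑ v ∈ S, (w v : ℤ) + ∑ v ∈ Sᶜ, (w v : ℤ) = ∑ v, (w v : ℤ) :=
    Finset.sum_add_sum_compl S _
  have hEu : G.edgesIn univ = univ := by
    ext e; simp [Multigraph.edgesIn]
  rw [Multigraph.genus, Multigraph.genusOf, Multigraph.genusOf, Multigraph.genusOf, hEu]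
  rw [Finset.card_univ]
  have hcV : (S.card : ℤ) + (Sᶜ.card : ℤ) = (Fintype.card V : ℤ) := by exact_mod_cast hV
  have hcE : (Fintype.card E : ℤ) =
      ((G.edgesIn S).card : ℤ) + ((G.edgesIn Sᶜ).card : ℤ) + (G.cutCard S : ℤ) := by
    exact_mod_cast hE
  rw [Finset.card_univ]
  linarith
lemma valence_pos (G : Multigraph V E) (hc : G.Connected) {u b : V} (hub : u ≠ b) :
    1 ≤ G.valence u := by
  have h := hc.2 u b
  rcases (Relation.ReflTransGen.cases_head h) with rfl | ⟨c, hadj, _⟩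
  · exact absurd rfl hub
  · obtain ⟨e, he⟩ := hadj
    rw [Multigraph.valence]
    rcases he with ⟨h1, _⟩ | ⟨_, h2⟩
    · have : e ∈ univ.filter fun e => G.fst e = u := by simp [h1]
      have := Finset.card_pos.mpr ⟨e, this⟩
      omega
    · have : e ∈ univ.filter fun e => G.snd e = u := by simp [h2]
      have := Finset.card_pos.mpr ⟨e, this⟩
      omega

lemma two_genus_pos (G : Multigraph V E) (w : V → ℕ) (hG : G.IsStable w)
    {S : Finset V} (hS : S.Nonempty) (hSne : S ≠ univ) :
    1 ≤ 2 * G.genusOf w S - 2 + (G.cutCard S : ℤ) := by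
  obtain ⟨b, hb⟩ : ∃ b, b ∉ S := by
    by_contra h
    push_neg at h
    exact hSne (Finset.eq_univ_iff_forall.mpr h)
  have key : 2 * G.genusOf w S - 2 + (G.cutCard S : ℤ) =
      ∑ u ∈ S, (2 * (w u : ℤ) - 2 + (G.valence u : ℤ)) := by
    have hv : (∑ u ∈ S, G.valence u : ℤ) = 2 * ((G.edgesIn S).card : ℤ) + (G.cutCard S : ℤ) := by
      exact_mod_cast sum_valence G S
    push_cast at hv ⊢
    rw [Multigraph.genusOf]
    rw [Finset.sum_add_distrib, Finset.sum_sub_distrib]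
    push_cast
    rw [← Finset.mul_sum]
    simp only [Finset.sum_const, nsmul_eq_mul, mul_one]
    linarith
  rw [key]
  have : ∀ u ∈ S, (1 : ℤ) ≤ 2 * (w u : ℤ) - 2 + (G.valence u : ℤ) := by
    intro u hu
    have hub : u ≠ b := fun h => hb (h ▸ hu)
    have hval : 1 ≤ G.valence u := valence_pos G hG.1 hub
    by_cases hw : w u = 0
    · have := hG.2.2 u hw
      have : (3 : ℤ) ≤ (G.valence u : ℤ) := by exact_mod_cast this
      simp [hw]; linarith
    · have : 1 ≤ w u := Nat.one_le_iff_ne_zero.mpr hw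
      have h1 : (1 : ℤ) ≤ (w u : ℤ) := by exact_mod_cast this
      have h2 : (1 : ℤ) ≤ (G.valence u : ℤ) := by exact_mod_cast hval
      linarith
  calc (1 : ℤ) ≤ S.card := by exact_mod_cast Finset.card_pos.mpr hS
    _ = ∑ u ∈ S, (1 : ℤ) := by simp
    _ ≤ _ := Finset.sum_le_sum this

lemma cutCard_compl (G : Multigraph V E) (S : Finset V) : G.cutCard Sᶜ = G.cutCard S := by
  rw [Multigraph.cutCard, Multigraph.cutCard]
  congr 1
  ext e
  rw [Finset.mem_filter, Finset.mem_filter]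
  simp only [Multigraph.InCut, Finset.mem_filter, Finset.mem_compl]
  tauto

lemma genus_ge_two (G : Multigraph V E) (w : V → ℕ) (hG : G.IsStable w) :
    2 ≤ G.genus w := hG.2.1

/-- Consequence of semistability at total degree g-2: `d(S) ≥ g(S) - 1` for proper nonempty S. -/
lemma semistable_ineq (G : Multigraph V E) (w : V → ℕ) (hG : G.IsStable w) (d : V → ℤ)
    (hd : ∑ v, d v = G.genus w - 2) (hss : G.Semistable w d)
    {S : Finset V} (hS : S.Nonempty) (hSne : S ≠ univ) :
    G.genusOf w S - 1 ≤ ∑ u ∈ S, d u := by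
  have h := hss S hS
  rw [hd] at h
  have hg := genus_ge_two G w hG
  have hcompl : 1 ≤ 2 * G.genusOf w Sᶜ - 2 + (G.cutCard Sᶜ : ℤ) := by
    refine two_genus_pos G w hG ?_ ?_
    · by_contra hne
      rw [Finset.not_nonempty_iff_eq_empty, Finset.compl_eq_empty_iff] at hne
      exact hSne hne
    · intro hc
      obtain ⟨v, hv⟩ := hS
      have : v ∈ Sᶜ := hc ▸ Finset.mem_univ v
      exact (Finset.mem_compl.mp this) hv
  rw [cutCard_compl] at hcompl
  have hgc := genus_compl G w S
  -- so 2*g(S)-2+cut ≤ 2g-3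
  have hb : 2 * G.genusOf w S - 2 + (G.cutCard S : ℤ) ≤ 2 * G.genus w - 3 := by linarith
  -- h : (2g-2)(gS-1) + (-1)(2gS-2+cut) ≤ (2g-2) dS
  by_contra hcon
  push_neg at hcon
  have ha : 1 ≤ G.genusOf w S - 1 - ∑ u ∈ S, d u := by linarith
  have h2 : (2 * G.genus w - 2) * 1 ≤ (2 * G.genus w - 2) * (G.genusOf w S - 1 - ∑ u ∈ S, d u) :=
    mul_le_mul_of_nonneg_left ha (by linarith)
  nlinarith
lemma card_slots (m : V → ℕ) (S : Finset V) :
    (univ.filter fun a : Σ u : V, Fin (m u) => a.1 ∈ S).card = ∑ u ∈ S, m u := by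
  have : (univ.filter fun a : Σ u : V, Fin (m u) => a.1 ∈ S) =
      S.sigma fun u => (univ : Finset (Fin (m u))) := by
    ext ⟨u, i⟩
    simp [Finset.mem_sigma]
  rw [this, Finset.card_sigma]
  simp

lemma exists_orientation (G : Multigraph V E) (m : V → ℕ)
    (hall : ∀ S : Finset V, (G.edgesIn S).card ≤ ∑ u ∈ S, m u)
    (htot : ∑ u, m u = Fintype.card E) :
    ∃ O : GraphOrientation G, ∀ u, O.indeg u = m u := by
  classical
  set t : E → Finset (Σ u : V, Fin (m u)) :=
    fun e => univ.filter fun a => a.1 = G.fst e ∨ a.1 = G.snd e with ht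
  have hhall : ∀ F : Finset E, F.card ≤ (F.biUnion t).card := by
    intro F
    set S : Finset V := F.image G.fst ∪ F.image G.snd with hSdef
    have h2 : F.biUnion t = univ.filter fun a : Σ u : V, Fin (m u) => a.1 ∈ S := by
      ext a
      simp only [Finset.mem_biUnion, ht, Finset.mem_filter, Finset.mem_univ, true_and,
        hSdef, Finset.mem_union, Finset.mem_image]
      constructor
      · rintro ⟨e, he, h | h⟩
        · exact Or.inl ⟨e, he, h.symm⟩
        · exact Or.inr ⟨e, he, h.symm⟩
      · rintro (⟨e, he, h⟩ | ⟨e, he, h⟩)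
        · exact ⟨e, he, Or.inl h.symm⟩
        · exact ⟨e, he, Or.inr h.symm⟩
    have h1 : F ⊆ G.edgesIn S := by
      intro e he
      simp only [Multigraph.edgesIn, Finset.mem_filter, Finset.mem_univ, true_and]
      constructor
      · exact Finset.mem_union_left _ (Finset.mem_image_of_mem _ he)
      · exact Finset.mem_union_right _ (Finset.mem_image_of_mem _ he)
    calc F.card ≤ (G.edgesIn S).card := Finset.card_le_card h1
      _ ≤ ∑ u ∈ S, m u := hall S
      _ = (F.biUnion t).card := by rw [h2, card_slots]
  obtain ⟨f, hfinj, hft⟩ := (Finset.all_card_le_biUnion_card_iff_exists_injective t).mp hhall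
  have hfe : ∀ e, (f e).1 = G.fst e ∨ (f e).1 = G.snd e := by
    intro e
    have := hft e
    simpa [ht] using this
  refine ⟨⟨fun e => if (f e).1 = G.fst e then G.snd e else G.fst e, fun e => (f e).1,
    fun e => ?_⟩, ?_⟩
  · by_cases h : (f e).1 = G.fst e
    · right; exact ⟨by simp [h], h⟩
    · left
      rcases hfe e with h' | h'
      · exact absurd h' h
      · exact ⟨by simp [h], h'⟩
  · -- indegrees
    intro u
    have hle : ∀ u : V, (univ.filter fun e => (f e).1 = u).card ≤ m u := by
      intro u
      have : (univ.filter fun e => (f e).1 = u).card ≤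
          (univ.filter fun a : Σ x : V, Fin (m x) => a.1 = u).card := by
        apply Finset.card_le_card_of_injOn f
        · intro e he
          simp only [Finset.mem_coe, Finset.mem_filter, Finset.mem_univ, true_and] at he ⊢
          exact he
        · exact hfinj.injOn
      calc (univ.filter fun e => (f e).1 = u).card
          ≤ (univ.filter fun a : Σ x : V, Fin (m x) => a.1 = u).card := this
        _ = ∑ x ∈ {u}, m x := by
            rw [← card_slots m {u}]; congr 1; ext a; simp
        _ = m u := by simp
    have hsum : ∑ x : V, (univ.filter fun e => (f e).1 = x).card = Fintype.card E := by
      rw [← Finset.card_univ]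
      exact (Finset.card_eq_sum_card_fiberwise (fun e _ => Finset.mem_univ ((f e).1))).symm
    have heq : ∀ x ∈ (univ : Finset V),
        (univ.filter fun e => (f e).1 = x).card = m x := by
      by_contra hcon
      push_neg at hcon
      obtain ⟨x, _, hx⟩ := hcon
      have hlt : (univ.filter fun e => (f e).1 = x).card < m x :=
        lt_of_le_of_ne (hle x) hx
      have : ∑ x : V, (univ.filter fun e => (f e).1 = x).card < ∑ x : V, m x :=
        Finset.sum_lt_sum (fun i _ => hle i) ⟨x, Finset.mem_univ x, hlt⟩
      omega
    have := heq u (Finset.mem_univ u)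
    simpa [GraphOrientation.indeg] using this
lemma cutCard_univ (G : Multigraph V E) : G.cutCard (univ : Finset V) = 0 := by
  rw [Multigraph.cutCard]
  simp [Multigraph.InCut]

lemma head_mem_of_incut (O : GraphOrientation G) {S : Finset V} {e : E}
    (h : G.InCut S e) (ht : O.tail e ∉ S) : O.head e ∈ S := by
  rcases O.compat e with ⟨h1, h2⟩ | ⟨h1, h2⟩ <;> rw [h1] at ht <;> rw [h2] <;>
    rcases h with ⟨ha, hb⟩ | ⟨ha, hb⟩ <;> tauto

lemma head_not_mem_of_incut (O : GraphOrientation G) {S : Finset V} {e : E}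
    (h : G.InCut S e) (ht : O.tail e ∈ S) : O.head e ∉ S := by
  rcases O.compat e with ⟨h1, h2⟩ | ⟨h1, h2⟩ <;> rw [h1] at ht <;> rw [h2] <;>
    rcases h with ⟨ha, hb⟩ | ⟨ha, hb⟩ <;> tauto

lemma edgesIn_card_eq (G : Multigraph V E) (w : V → ℕ) (S : Finset V) :
    ((G.edgesIn S).card : ℤ) = G.genusOf w S - 1 + S.card - ∑ u ∈ S, (w u : ℤ) := by
  rw [Multigraph.genusOf]; ring

lemma genus_univ_eq (G : Multigraph V E) (w : V → ℕ) :
    G.genusOf w (univ : Finset V) = G.genus w := rfl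

end Aux

/-- A multidegree of total degree `g - 2` on a stable weighted multigraph
is semistable iff for every vertex `v` there is an orientation `O` with `d = d_O - v`
and no nonempty proper subset `S ⊊ V` with `v ∈ S` whose cut is directed away from `S`. -/
theorem semistable_degree_g_sub_two_iff_orientations
    (G : Multigraph V E) (w : V → ℕ) (hG : G.IsStable w) (d : V → ℤ)
    (hd : ∑ v, d v = G.genus w - 2) :
    G.Semistable w d ↔
      ∀ v : V, ∃ O : GraphOrientation G,
        d = (fun u => O.multidegree w u - if u = v then 1 else 0) ∧
        ¬ ∃ S : Finset V, S.Nonempty ∧ S ≠ univ ∧ v ∈ S ∧ O.CutAway S := by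
  have hg := genus_ge_two G w hG
  constructor
  · -- semistable → orientations
    intro hss v
    set md : V → ℤ := fun u => d u + (if u = v then 1 else 0) - (w u : ℤ) + 1 with hmd
    have hmd_nonneg : ∀ u, 0 ≤ md u := by
      intro u
      by_cases huniv : ({u} : Finset V) = univ
      · have hdu : d u = G.genus w - 2 := by
          rw [← hd, ← Finset.sum_singleton (f := d) (a := u), huniv]
        have hvu : v = u := by
          have : v ∈ ({u} : Finset V) := huniv ▸ Finset.mem_univ v
          simpa using this
        have hgen : G.genus w = ((G.edgesIn {u}).card : ℤ) + (w u : ℤ) := by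
          rw [← genus_univ_eq G w, ← huniv, Multigraph.genusOf]
          simp
        have hcard : (0 : ℤ) ≤ ((G.edgesIn {u}).card : ℤ) := Int.natCast_nonneg _
        have hite : (if u = v then (1:ℤ) else 0) = 1 := if_pos hvu.symm
        show (0:ℤ) ≤ d u + (if u = v then 1 else 0) - (w u : ℤ) + 1
        rw [hite]
        linarith
      · have h1 : G.genusOf w {u} - 1 ≤ ∑ x ∈ {u}, d x :=
          semistable_ineq G w hG d hd hss (Finset.singleton_nonempty u) huniv
        rw [Finset.sum_singleton, Multigraph.genusOf] at h1
        simp only [Finset.card_singleton, Finset.sum_singleton] at h1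
        push_cast at h1
        have hcard : (0 : ℤ) ≤ ((G.edgesIn {u}).card : ℤ) := Int.natCast_nonneg _
        have hite : (0:ℤ) ≤ (if u = v then (1:ℤ) else 0) := by positivity
        show (0:ℤ) ≤ d u + (if u = v then 1 else 0) - (w u : ℤ) + 1
        linarith
    set m : V → ℕ := fun u => (md u).toNat with hm
    have hmc : ∀ u, (m u : ℤ) = md u := fun u => Int.toNat_of_nonneg (hmd_nonneg u)
    have hsum_m : ∀ S : Finset V, ∑ u ∈ S, (m u : ℤ) =
        ∑ u ∈ S, d u + (if v ∈ S then 1 else 0) - ∑ u ∈ S, (w u : ℤ) + S.card := by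
      intro S
      calc ∑ u ∈ S, (m u : ℤ) = ∑ u ∈ S, (d u + (if u = v then 1 else 0) - (w u : ℤ) + 1) := by
            exact Finset.sum_congr rfl fun u _ => hmc u
        _ = ∑ u ∈ S, d u + (∑ u ∈ S, if u = v then (1:ℤ) else 0) - ∑ u ∈ S, (w u : ℤ) + S.card := by
            rw [Finset.sum_add_distrib, Finset.sum_sub_distrib, Finset.sum_add_distrib]
            simp
        _ = _ := by rw [Finset.sum_ite_eq' S v (fun _ => (1:ℤ))]
    have hkey : ∀ S : Finset V, ((G.edgesIn S).card : ℤ) +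
        (if v ∈ S ∧ S ≠ univ then 1 else 0) ≤ ∑ u ∈ S, (m u : ℤ) := by
      intro S
      rcases Finset.eq_empty_or_nonempty S with rfl | hS
      · simp [Multigraph.edgesIn]
      rw [hsum_m S, edgesIn_card_eq G w S]
      by_cases hSu : S = univ
      · subst hSu
        rw [genus_univ_eq]
        have h0 : ∑ u : V, d u = G.genus w - 2 := hd
        simp only [Finset.mem_univ, if_true, ne_eq, not_true_eq_false, and_false, if_false,
          Finset.card_univ]
        linarith
      · have h1 : G.genusOf w S - 1 ≤ ∑ u ∈ S, d u :=
          semistable_ineq G w hG d hd hss hS hSu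
        by_cases hvS : v ∈ S <;> simp [hvS, hSu] <;> linarith
    have hall : ∀ S : Finset V, (G.edgesIn S).card ≤ ∑ u ∈ S, m u := by
      intro S
      have := hkey S
      have h2 : ((G.edgesIn S).card : ℤ) ≤ ∑ u ∈ S, (m u : ℤ) := by
        refine le_trans ?_ this
        by_cases h : v ∈ S ∧ S ≠ univ <;> simp [h]
      exact_mod_cast (by push_cast at h2 ⊢; exact h2 : ((G.edgesIn S).card : ℤ) ≤ ((∑ u ∈ S, m u : ℕ) : ℤ))
    have htot : ∑ u, m u = Fintype.card E := by
      have h1 : ∑ u : V, (m u : ℤ) = (Fintype.card E : ℤ) := by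
        rw [hsum_m univ, hd]
        have : ((G.edgesIn (univ : Finset V)).card : ℤ) =
            G.genusOf w univ - 1 + (univ : Finset V).card - ∑ u, (w u : ℤ) :=
          edgesIn_card_eq G w univ
        have hEu : G.edgesIn (univ : Finset V) = univ := by
          ext e; simp [Multigraph.edgesIn]
        rw [hEu, genus_univ_eq, Finset.card_univ, Finset.card_univ] at this
        simp only [Finset.mem_univ, if_true, Finset.card_univ]
        linarith
      exact_mod_cast (by push_cast at h1 ⊢; exact h1 :
        ((∑ u, m u : ℕ) : ℤ) = (Fintype.card E : ℤ))
    obtain ⟨O, hO⟩ := exists_orientation G m hall htot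
    refine ⟨O, ?_, ?_⟩
    · funext u
      have h1 : (O.indeg u : ℤ) = md u := by rw [hO u]; exact hmc u
      simp only [GraphOrientation.multidegree, h1, hmd]
      ring
    · rintro ⟨S, hSne, hSuniv, hvS, hcut⟩
      have hsi := sum_indeg O S
      have hempty : (univ.filter fun e => G.InCut S e ∧ O.head e ∈ S) = ∅ := by
        rw [Finset.filter_eq_empty_iff]
        rintro e - ⟨hic, hhd⟩
        exact head_not_mem_of_incut O hic (hcut e hic) hhd
      rw [hempty] at hsi
      simp only [Finset.card_empty, add_zero] at hsi
      have hOS : ∑ u ∈ S, O.indeg u = ∑ u ∈ S, m u :=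
        Finset.sum_congr rfl fun u _ => hO u
      have hk := hkey S
      rw [if_pos ⟨hvS, hSuniv⟩] at hk
      have h5 : ∑ u ∈ S, m u = (G.edgesIn S).card := by rw [← hOS]; exact hsi
      have h6 : ∑ u ∈ S, (m u : ℤ) = ((G.edgesIn S).card : ℤ) := by exact_mod_cast h5
      linarith
  · -- orientations → semistable
    intro h S hS
    by_cases hSu : S = univ
    · subst hSu
      rw [genus_univ_eq, cutCard_univ, hd]
      have heq : (2 * G.genus w - 2) * (G.genus w - 1) +
          (G.genus w - 2 - G.genus w + 1) * (2 * G.genus w - 2 + (0:ℤ)) =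
          (2 * G.genus w - 2) * (G.genus w - 2) := by ring
      push_cast
      linarith
    · obtain ⟨v, hv⟩ := id hS
      obtain ⟨O, hdO, hno⟩ := h v
      push_neg at hno
      have hnc : ¬ O.CutAway S := hno S hS hSu hv
      rw [GraphOrientation.CutAway] at hnc
      push_neg at hnc
      obtain ⟨e, hice, hte⟩ := hnc
      have hhd : O.head e ∈ S := head_mem_of_incut O hice hte
      have hcpos : 1 ≤ (univ.filter fun e => G.InCut S e ∧ O.head e ∈ S).card := by
        refine Finset.card_pos.mpr ⟨e, ?_⟩
        simp [hice, hhd]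
      have hsi := sum_indeg O S
      have hdS : ∑ u ∈ S, d u = ∑ u ∈ S, (w u : ℤ) - S.card + (∑ u ∈ S, O.indeg u : ℕ) - 1 := by
        have : ∀ u ∈ S, d u = (w u : ℤ) - 1 + O.indeg u - (if u = v then 1 else 0) := by
          intro u _
          rw [hdO]
          simp [GraphOrientation.multidegree]
        rw [Finset.sum_congr rfl this]
        rw [Finset.sum_sub_distrib, Finset.sum_add_distrib, Finset.sum_sub_distrib]
        rw [Finset.sum_ite_eq' S v (fun _ => (1:ℤ)), if_pos hv]
        push_cast
        simp
      have hdSge : G.genusOf w S - 1 ≤ ∑ u ∈ S, d u := by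
        rw [hdS]
        have h2 : ((G.edgesIn S).card : ℤ) + 1 ≤ (∑ u ∈ S, O.indeg u : ℕ) := by
          rw [hsi]; push_cast; omega
        have h3 := edgesIn_card_eq G w S
        linarith
      have hpos := two_genus_pos G w hG hS hSu
      have hmul : (2 * G.genus w - 2) * (G.genusOf w S - 1) ≤
          (2 * G.genus w - 2) * ∑ u ∈ S, d u :=
        mul_le_mul_of_nonneg_left hdSge (by linarith)
      rw [hd]
      nlinarith
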